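/- Hamilton–Jacobi PDE for the symplectic Euler modified Hamiltonian of the harmonic oscillator (instance of Proposition 2(a)): for t ∈ (−π/2, π/2) with t ≠ 0, define Ĥ_SE(p,q,t) = (sin t·(p² + q²)/2 + (1 − cos t)·p·q)/(t·cos t). Then for all (p,q) ∈ ℝ² and all such t, ∂/∂t [t·Ĥ_SE(p,q,t)] = H(p, q + t·∂Ĥ_SE/∂p(p,q,t)), where H(p,q) = (p² + q²)/2; explicitly, both sides equal sec²t·(p² + q²)/2 + sec t·tan t·p·q. -/

import Mathlib

noncomputable section

/-- The time-dependent modified Hamiltonian of the symplectic Euler method for the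
harmonic oscillator. -/
def HSE (p q t : ℝ) : ℝ :=
  (Real.sin t * (p ^ 2 + q ^ 2) / 2 + (1 - Real.cos t) * p * q) / (t * Real.cos t)

/-- Hamilton–Jacobi PDE for the symplectic Euler modified Hamiltonian of
the harmonic oscillator: for `t ∈ (−π/2, π/2)`, `t ≠ 0`,
`∂/∂t [t·Ĥ_SE(p,q,t)] = H(p, q + t·∂Ĥ_SE/∂p(p,q,t))` with `H(p,q) = (p² + q²)/2`;
explicitly, both sides equal `sec²t·(p² + q²)/2 + sec t·tan t·p·q`. -/
theorem stmt11 (t : ℝ) (ht : t ∈ Set.Ioo (-(Real.pi / 2)) (Real.pi / 2)) (ht0 : t ≠ 0) :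
    ∀ p q : ℝ,
      deriv (fun s => s * HSE p q s) t =
          (p ^ 2 + (q + t * deriv (fun P => HSE P q t) p) ^ 2) / 2 ∧
        deriv (fun s => s * HSE p q s) t =
          (1 / Real.cos t) ^ 2 * (p ^ 2 + q ^ 2) / 2 +
            (1 / Real.cos t) * (Real.tan t) * p * q := by
  intro p q
  have hcos : Real.cos t ≠ 0 := by
    have := Real.cos_pos_of_mem_Ioo ht
    linarith
  set C : ℝ := (p ^ 2 + q ^ 2) / 2 with hC
  set D : ℝ := p * q with hD
  -- derivative in p
  have hP : HasDerivAt (fun P : ℝ => HSE P q t)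
      ((Real.sin t * p + (1 - Real.cos t) * q) / (t * Real.cos t)) p := by
    have h1 : HasDerivAt (fun P : ℝ => Real.sin t * (P ^ 2 + q ^ 2) / 2 +
        (1 - Real.cos t) * P * q) (Real.sin t * p + (1 - Real.cos t) * q) p := by
      have hsq : HasDerivAt (fun P : ℝ => P ^ 2) (2 * p) p := by
        simpa using hasDerivAt_pow 2 p
      have := ((hsq.add_const (q ^ 2)).const_mul (Real.sin t)).div_const 2
      have h2 := ((hasDerivAt_id p).const_mul (1 - Real.cos t)).mul_const q
      refine (this.add h2).congr_deriv ?_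
      ring
    simpa [HSE] using h1.div_const (t * Real.cos t)
  have hPderiv : deriv (fun P : ℝ => HSE P q t) p =
      (Real.sin t * p + (1 - Real.cos t) * q) / (t * Real.cos t) := hP.deriv
  -- derivative in s of f s = (sin s * C + (1 - cos s) * D) / cos s
  have hnum : HasDerivAt (fun s : ℝ => Real.sin s * C + (1 - Real.cos s) * D)
      (Real.cos t * C + Real.sin t * D) t := by
    have h1 := (Real.hasDerivAt_sin t).mul_const C
    have h2 := (((Real.hasDerivAt_cos t).const_sub 1)).mul_const D
    refine (h1.add h2).congr_deriv ?_
    ring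
  have hf : HasDerivAt (fun s : ℝ => (Real.sin s * C + (1 - Real.cos s) * D) / Real.cos s)
      (((Real.cos t * C + Real.sin t * D) * Real.cos t -
        (Real.sin t * C + (1 - Real.cos t) * D) * (-Real.sin t)) / Real.cos t ^ 2) t :=
    hnum.div (Real.hasDerivAt_cos t) hcos
  have heq : (fun s : ℝ => s * HSE p q s) =ᶠ[nhds t]
      (fun s : ℝ => (Real.sin s * C + (1 - Real.cos s) * D) / Real.cos s) := by
    filter_upwards [eventually_ne_nhds ht0] with s hs
    simp only [HSE, hC, hD]
    rw [mul_comm s (Real.cos s), div_mul_eq_div_div, ← mul_div_assoc,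
      mul_div_cancel_left₀ _ hs]
    ring
  have hderiv : deriv (fun s : ℝ => s * HSE p q s) t =
      ((Real.cos t * C + Real.sin t * D) * Real.cos t -
        (Real.sin t * C + (1 - Real.cos t) * D) * (-Real.sin t)) / Real.cos t ^ 2 := by
    rw [heq.deriv_eq, hf.deriv]
  have hpyth := Real.sin_sq_add_cos_sq t
  constructor
  · rw [hderiv, hPderiv, hC, hD]
    field_simp
    linear_combination q ^ 2 * hpyth
  · rw [hderiv, Real.tan_eq_sin_div_cos, hC, hD]
    field_simp
    linear_combination (p ^ 2 + q ^ 2) * hpyth
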